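/- Let q, a, β be complex numbers with |q| < 1, a ≠ 0, q ≠ 0, and β q^j ≠ 1 for all integers j ≥ 0, and let n ≥ 1 be an integer (so that the points q^1/a, …, q^{n+1}/a are pairwise distinct, which holds since |q| < 1 and q ≠ 0). Then the n-th iterated divided difference of the function x ↦ 1/( (a β x q^{n−1}; q)_∞ ) at the points x_j = q^j/a (1 ≤ j ≤ n+1) satisfies Σ_{j=1}^{n+1} [ 1/( (β q^{n+j−1}; q)_∞ ) ] / ∏_{1 ≤ l ≤ n+1, l ≠ j} (q^j/a − q^l/a) = (a β)^n q^{n(n−1)} / ( (q; q)_n (β q^n; q)_∞ ). -/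

import Mathlib

open Finset Complex

private lemma jk_hasProd {q : ℂ} (hq : ‖q‖ < 1) {x : ℂ}
    (hx : ∀ m : ℕ, 1 - x * q ^ m ≠ 0) :
    HasProd (fun m : ℕ => 1 - x * q ^ m)
      (Complex.exp (∑' m : ℕ, Complex.log (1 - x * q ^ m))) := by
  have hs : Summable (fun m : ℕ => x * q ^ m) :=
    (summable_geometric_of_norm_lt_one (by simpa using hq)).mul_left x
  have h1 : Summable (fun m : ℕ => Complex.log (1 - x * q ^ m)) := hs.clog_one_sub
  have h2 := h1.hasSum.cexp
  have : (cexp ∘ fun m : ℕ => Complex.log (1 - x * q ^ m)) = fun m : ℕ => 1 - x * q ^ m := by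
    funext m; exact Complex.exp_log (hx m)
  rwa [this] at h2

private lemma jk_mult {q : ℂ} (hq : ‖q‖ < 1) {x : ℂ}
    (hx : ∀ m : ℕ, 1 - x * q ^ m ≠ 0) :
    Multipliable (fun m : ℕ => 1 - x * q ^ m) := ⟨_, jk_hasProd hq hx⟩

private lemma jk_tprod_ne_zero {q : ℂ} (hq : ‖q‖ < 1) {x : ℂ}
    (hx : ∀ m : ℕ, 1 - x * q ^ m ≠ 0) :
    (∏' m : ℕ, (1 - x * q ^ m)) ≠ 0 := by
  rw [(jk_hasProd hq hx).tprod_eq]; exact Complex.exp_ne_zero _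

private lemma jk_peel {q : ℂ} (hq : ‖q‖ < 1) {x : ℂ}
    (hx : ∀ m : ℕ, 1 - x * q ^ m ≠ 0) (k : ℕ) :
    (∏' m : ℕ, (1 - x * q ^ m))
      = (∏ i ∈ range k, (1 - x * q ^ i)) * ∏' m : ℕ, (1 - x * q ^ k * q ^ m) := by
  have hx' : ∀ m : ℕ, 1 - x * q ^ k * q ^ m ≠ 0 := fun m => by
    have := hx (k + m); rwa [pow_add, ← mul_assoc] at this
  have hfe : (fun m : ℕ => 1 - x * q ^ (m + k)) = fun m : ℕ => 1 - x * q ^ k * q ^ m :=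
    funext fun m => by rw [pow_add]; ring
  have hm : Multipliable (fun m : ℕ => 1 - x * q ^ (m + k)) := by
    rw [hfe]; exact jk_mult hq hx'
  have h := Multipliable.prod_mul_tprod_nat_mul' (f := fun m : ℕ => 1 - x * q ^ m) (k := k) hm
  rw [← h, hfe]


private def jqp (q c : ℂ) (k : ℕ) : ℂ := ∏ i ∈ range k, (1 - c * q ^ i)

@[simp] private lemma jqp_zero (q c : ℂ) : jqp q c 0 = 1 := rfl

private lemma jqp_succ (q c : ℂ) (k : ℕ) : jqp q c (k + 1) = jqp q c k * (1 - c * q ^ k) := by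
  rw [jqp, prod_range_succ]; rfl

private def jgb (q : ℂ) : ℕ → ℕ → ℂ
  | _, 0 => 1
  | 0, _ + 1 => 0
  | n + 1, k + 1 => jgb q n (k + 1) + q ^ (n - k) * jgb q n k

@[simp] private lemma jgb_zero (q : ℂ) (n : ℕ) : jgb q n 0 = 1 := by cases n <;> rfl

private lemma jgb_of_lt (q : ℂ) : ∀ n k, n < k → jgb q n k = 0 := by
  intro n
  induction n with
  | zero => intro k hk; match k, hk with | k + 1, _ => rfl
  | succ n ih =>
    intro k hk
    match k, hk with
    | k + 1, hk =>
      show jgb q n (k + 1) + q ^ (n - k) * jgb q n k = 0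
      rw [ih _ (by omega), ih _ (by omega)]; ring

private lemma jgb_self (q : ℂ) : ∀ n, jgb q n n = 1 := by
  intro n
  induction n with
  | zero => rfl
  | succ n ih =>
    show jgb q n (n + 1) + q ^ (n - n) * jgb q n n = 1
    rw [jgb_of_lt q n (n + 1) (by omega), ih]; simp

private lemma jgb_mul (q : ℂ) : ∀ n k, k ≤ n →
    jgb q n k * (jqp q q k * jqp q q (n - k)) = jqp q q n := by
  intro n
  induction n with
  | zero => intro k hk; interval_cases k; simp [jqp]
  | succ n ih =>
    intro k hk
    match k with
    | 0 => simp [jqp]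
    | k + 1 =>
      show (jgb q n (k + 1) + q ^ (n - k) * jgb q n k) * _ = _
      rcases Nat.lt_or_ge k n with h | h
      · -- k + 1 ≤ n
        have e1 : n + 1 - (k + 1) = (n - (k + 1)) + 1 := by omega
        have e2 : jqp q q ((n - (k+1)) + 1) = jqp q q (n - (k+1)) * (1 - q * q ^ (n - (k+1))) := by
          rw [jqp, prod_range_succ]; rfl
        have e3 : jqp q q (k + 1) = jqp q q k * (1 - q * q ^ k) := by
          rw [jqp, prod_range_succ]; rfl
        have i1 := ih (k + 1) (by omega)
        have i2 := ih k (by omega)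
        have e4 : jqp q q (n + 1) = jqp q q n * (1 - q * q ^ n) := by
          rw [jqp, prod_range_succ]; rfl
        have e5 : n - (k + 1) = n - k - 1 := by omega
        have e6 : (n - k) = (n - (k + 1)) + 1 := by omega
        have e7 : q * q ^ (n - (k + 1)) = q ^ (n - k) := by
          rw [e6, pow_succ]; ring
        have e8 : q ^ (n - k) * (q * q ^ k) = q * q ^ n := by
          rw [← pow_succ', ← pow_succ', ← pow_add]; congr 1; omega
        rw [e1, e2, e3, e4, e7]
        rw [e3] at i1
        rw [e6, e2, e7] at i2
        linear_combination (1 - q ^ (n - k)) * i1 + q ^ (n - k) * (1 - q * q ^ k) * i2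
          - jqp q q n * e8
      · -- k = n
        have hkn : k = n := by omega
        rw [hkn, jgb_of_lt q n (n + 1) (by omega), jgb_self, Nat.sub_self, Nat.sub_self]
        simp [jqp]

private lemma jk_tri (k : ℕ) : (k + 1) * (k + 1 + 1) / 2 = k * (k + 1) / 2 + (k + 1) := by
  obtain ⟨m, hm⟩ := Nat.even_mul_succ_self k
  have h2 : (k + 1) * (k + 1 + 1) = k * (k + 1) + 2 * (k + 1) := by ring
  omega

private lemma jgb_sum (q : ℂ) (hq0 : q ≠ 0) (c : ℂ) : ∀ n : ℕ,
    ∑ k ∈ range (n + 1),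
        jgb q n k * (-1) ^ k * q ^ (k * (k + 1) / 2) / q ^ (k * n) * jqp q c k
      = c ^ n := by
  intro n
  induction n with
  | zero => simp
  | succ n ih =>
    rw [Finset.sum_range_succ']
    have h0 : jgb q (n + 1) 0 * (-1) ^ 0 * q ^ (0 * (0 + 1) / 2) / q ^ (0 * (n + 1)) *
        jqp q c 0 = 1 := by simp
    rw [h0]
    have hterm : ∀ k ∈ range (n + 1),
        jgb q (n + 1) (k + 1) * (-1) ^ (k + 1) * q ^ ((k + 1) * (k + 1 + 1) / 2) /
            q ^ ((k + 1) * (n + 1)) * jqp q c (k + 1)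
          = jgb q n (k + 1) * (-1) ^ (k + 1) * q ^ ((k + 1) * (k + 1 + 1) / 2) /
              q ^ ((k + 1) * (n + 1)) * jqp q c (k + 1)
            + (c * (jgb q n k * (-1) ^ k * q ^ (k * (k + 1) / 2) / q ^ (k * n) * jqp q c k)
              - jgb q n k * (-1) ^ k * q ^ (k * (k + 1) / 2) / q ^ (k * (n + 1)) *
                  jqp q c k) := by
      intro k hk
      obtain ⟨m, rfl⟩ : ∃ m, n = k + m := ⟨n - k, by have := mem_range.mp hk; omega⟩
      have hD : (q : ℂ) ^ ((k + 1) * (k + m + 1)) ≠ 0 := pow_ne_zero _ hq0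
      have hsplit : jgb q (k + m + 1) (k + 1)
          = jgb q (k + m) (k + 1) + q ^ (k + m - k) * jgb q (k + m) k := rfl
      have E1 : q ^ ((k + 1) * (k + 1 + 1) / 2) = q ^ (k * (k + 1) / 2) * q ^ (k + 1) := by
        rw [← pow_add]; congr 1; have := jk_tri k; omega
      have r2 : ∀ X : ℂ, X / q ^ (k * (k + m))
          = X * q ^ (k + m + k + 1) / q ^ ((k + 1) * (k + m + 1)) := by
        intro X
        rw [div_eq_div_iff (pow_ne_zero _ hq0) hD, mul_assoc, ← pow_add]
        congr 2
        ring
      have r3 : ∀ X : ℂ, X / q ^ (k * (k + m + 1))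
          = X * q ^ (k + m + 1) / q ^ ((k + 1) * (k + m + 1)) := by
        intro X
        rw [div_eq_div_iff (pow_ne_zero _ hq0) hD, mul_assoc, ← pow_add]
        congr 2
        ring
      simp only [div_mul_eq_mul_div, mul_div_assoc']
      rw [hsplit, Nat.add_sub_cancel_left, jqp_succ, E1, r2, r3, div_sub_div_same,
        ← add_div, div_eq_div_iff hD hD]
      ring
    rw [Finset.sum_congr rfl hterm, Finset.sum_add_distrib, Finset.sum_sub_distrib, ← mul_sum]
    have A1 := Finset.sum_range_succ' (fun j => jgb q n j * (-1) ^ j * q ^ (j * (j + 1) / 2) /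
        q ^ (j * (n + 1)) * jqp q c j) (n + 1)
    have A2 := Finset.sum_range_succ (fun j => jgb q n j * (-1) ^ j * q ^ (j * (j + 1) / 2) /
        q ^ (j * (n + 1)) * jqp q c j) (n + 1)
    have hgn1 : jgb q n (n + 1) * (-1) ^ (n + 1) * q ^ ((n + 1) * (n + 1 + 1) / 2) /
        q ^ ((n + 1) * (n + 1)) * jqp q c (n + 1) = 0 := by
      rw [jgb_of_lt q n (n + 1) (by omega)]; ring
    simp only [jgb_zero, jqp_zero, pow_zero, Nat.zero_mul, Nat.mul_zero, mul_one, one_mul,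
      div_one] at A1
    rw [pow_succ c n, ← ih]
    linear_combination A2 - A1 + hgn1


private lemma jk_prod1 (q a : ℂ) (ha : a ≠ 0) (k : ℕ) :
    ∏ l ∈ Icc 1 k, (q ^ (k + 1) / a - q ^ l / a)
      = (-1) ^ k * q ^ (k * (k + 1) / 2) * jqp q q k / a ^ k := by
  rw [← Finset.Ico_add_one_right_eq_Icc, Finset.prod_Ico_eq_prod_range]
  simp only [Nat.add_sub_cancel]
  have step : ∀ i ∈ range k, q ^ (k + 1) / a - q ^ (1 + i) / a
      = -1 * (1 - q * q ^ (k - 1 - i)) * q ^ (1 + i) / a := by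
    intro i hi
    have hi' : i < k := mem_range.mp hi
    have hE : q * q ^ (k - 1 - i) * q ^ (1 + i) = q ^ (k + 1) := by
      rw [← pow_succ', ← pow_add]; congr 1; omega
    linear_combination -hE / a
  rw [Finset.prod_congr rfl step]
  have expand : ∀ i ∈ range k, -1 * (1 - q * q ^ (k - 1 - i)) * q ^ (1 + i) / a
      = (-1) * ((1 - q * q ^ (k - 1 - i)) * (q ^ (1 + i) / a)) := by
    intro i _; ring
  rw [Finset.prod_congr rfl expand, Finset.prod_mul_distrib, Finset.prod_mul_distrib,
    Finset.prod_const, Finset.prod_range_reflect (fun i => 1 - q * q ^ i) k, card_range]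
  have : ∏ i ∈ range k, q ^ (1 + i) / a = q ^ (k * (k + 1) / 2) / a ^ k := by
    rw [Finset.prod_div_distrib, Finset.prod_const, Finset.prod_pow_eq_pow_sum, card_range]
    congr 1
    congr 1
    have h1 : ∑ i ∈ range k, (1 + i) = k + ∑ i ∈ range k, i := by
      rw [Finset.sum_add_distrib, Finset.sum_const, card_range, smul_eq_mul, mul_one]
    have h2 : (∑ i ∈ range k, i) * 2 = k * (k - 1) := Finset.sum_range_id_mul_two k
    have h3 : k * (k + 1) = k * (k - 1) + 2 * k := by cases k with
      | zero => rfl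
      | succ k' => simp only [Nat.add_sub_cancel]; ring
    omega
  rw [this, jqp]
  ring

private lemma jk_prod2 (q a : ℂ) (k m : ℕ) :
    ∏ l ∈ Icc (k + 2) (k + m + 1), (q ^ (k + 1) / a - q ^ l / a)
      = q ^ ((k + 1) * m) * jqp q q m / a ^ m := by
  rw [← Finset.Ico_add_one_right_eq_Icc, Finset.prod_Ico_eq_prod_range]
  have hc : k + m + 1 + 1 - (k + 2) = m := by omega
  rw [hc]
  have step : ∀ i ∈ range m, q ^ (k + 1) / a - q ^ (k + 2 + i) / a
      = q ^ (k + 1) * ((1 - q * q ^ i) / a) := by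
    intro i _
    have hE : q ^ (k + 1) * (q * q ^ i) = q ^ (k + 2 + i) := by
      rw [← pow_succ', ← pow_add]; congr 1; omega
    linear_combination (-1 / a) * hE
  rw [Finset.prod_congr rfl step, Finset.prod_mul_distrib, Finset.prod_const,
    Finset.prod_div_distrib, Finset.prod_const, card_range, ← pow_mul, jqp]
  ring

private lemma jk_prod (q a : ℂ) (ha : a ≠ 0) (k m : ℕ) :
    ∏ l ∈ (Icc 1 (k + m + 1)).erase (k + 1), (q ^ (k + 1) / a - q ^ l / a)
      = (-1) ^ k * q ^ (k * (k + 1) / 2) * q ^ ((k + 1) * m) * jqp q q k * jqp q q m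
          / a ^ (k + m) := by
  have hset : (Icc 1 (k + m + 1)).erase (k + 1) = Icc 1 k ∪ Icc (k + 2) (k + m + 1) := by
    ext x; simp only [mem_erase, mem_Icc, mem_union]; omega
  have hdisj : Disjoint (Icc 1 k) (Icc (k + 2) (k + m + 1)) := by
    rw [Finset.disjoint_left]; intro x hx hx'
    simp only [mem_Icc] at hx hx'; omega
  rw [hset, Finset.prod_union hdisj, jk_prod1 q a ha k, jk_prod2 q a k m, pow_add]
  field_simp

private lemma jk_alg (X J A1 A2 A3 G U V W Z AA s : ℂ)
    (hX : X ≠ 0) (hJ : J ≠ 0) (hA1 : A1 ≠ 0) (hA2 : A2 ≠ 0) (hA3 : A3 ≠ 0)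
    (hU : U ≠ 0) (hV : V ≠ 0) (hW : W ≠ 0) (hZ : Z ≠ 0) (hAA : AA ≠ 0)
    (hgb : G * (A1 * A2) = A3) (hE : U * U * V = W * Z) (hs : s * s = 1) :
    1 / X / (s * U * V * A1 * A2 / AA) = AA / (W * A3 * (J * X)) * (G * s * U / Z * J) := by
  have hsne : s ≠ 0 := fun h => by rw [h] at hs; simp at hs
  have l1 : 1 / X / (s * U * V * A1 * A2 / AA) = AA / (X * (s * U * V * A1 * A2)) := by
    rw [div_div_eq_mul_div, one_div, inv_mul_eq_div, div_div]
  have r1 : AA / (W * A3 * (J * X)) * (G * s * U / Z * J)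
      = AA * (G * s * U * J) / (Z * (W * A3 * (J * X))) := by
    rw [div_mul_eq_mul_div, div_mul_eq_mul_div, ← mul_div_assoc, div_div]
  have d1 : X * (s * U * V * A1 * A2) ≠ 0 :=
    mul_ne_zero hX (mul_ne_zero (mul_ne_zero (mul_ne_zero (mul_ne_zero hsne hU) hV) hA1) hA2)
  have d2 : Z * (W * A3 * (J * X)) ≠ 0 :=
    mul_ne_zero hZ (mul_ne_zero (mul_ne_zero hW hA3) (mul_ne_zero hJ hX))
  rw [l1, r1, div_eq_div_iff d1 d2]
  linear_combination (-AA * X * J * A3) * hE + (-AA * X * J * U * U * V) * hgb +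
    (-AA * X * J * G * A1 * A2 * U * U * V) * hs


/-- **The divided-difference computation behind Jackson's formula.**
Let `q, a, β ∈ ℂ` with `|q| < 1`, `q ≠ 0`, `a ≠ 0`, `β q^j ≠ 1` for all `j ≥ 0`, and
let `n ≥ 1` (the points `q^1/a, …, q^(n+1)/a` are then pairwise distinct).  The `n`-th
iterated divided difference of `x ↦ 1/((a β x q^(n-1);q)_∞)` at the points
`x_j = q^j/a` (note `(a β x_j q^(n-1);q)_∞ = (β q^(n+j-1);q)_∞`) satisfies
`∑_{j=1}^{n+1} (1/(β q^(n+j-1);q)_∞) / ∏_{l ≠ j} (q^j/a - q^l/a)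
  = (a β)^n q^(n(n-1)) / ((q;q)_n (β q^n;q)_∞)`. -/
theorem divided_difference_jackson (q a β : ℂ) (n : ℕ) (hn : 1 ≤ n)
    (hq : ‖q‖ < 1) (hq0 : q ≠ 0) (ha : a ≠ 0)
    (hβ : ∀ j : ℕ, β * q ^ j ≠ 1) :
    ∑ j ∈ Finset.Icc 1 (n + 1),
        (1 / ∏' m : ℕ, (1 - β * q ^ (n + j - 1) * q ^ m)) /
          ∏ l ∈ (Finset.Icc 1 (n + 1)).erase j, (q ^ j / a - q ^ l / a)
      = (a * β) ^ n * q ^ (n * (n - 1)) /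
          ((∏ j ∈ range n, (1 - q * q ^ j)) * ∏' m : ℕ, (1 - β * q ^ n * q ^ m)) := by
  have h1q : ∀ i : ℕ, (1 : ℂ) - q * q ^ i ≠ 0 := by
    intro i
    have habs : ‖q * q ^ i‖ < 1 := by
      rw [norm_mul, norm_pow, ← pow_succ']
      exact pow_lt_one₀ (norm_nonneg _) hq (Nat.succ_ne_zero i)
    intro h
    have h1 : q * q ^ i = 1 := by linear_combination -h
    rw [h1] at habs; simp at habs
  have hqq_ne : ∀ t : ℕ, jqp q q t ≠ 0 := fun t =>
    Finset.prod_ne_zero_iff.mpr fun i _ => h1q i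
  have hβx : ∀ t i : ℕ, (1 : ℂ) - β * q ^ t * q ^ i ≠ 0 := by
    intro t i h
    apply hβ (t + i)
    rw [pow_add, ← mul_assoc]
    linear_combination -h
  have hJc_ne : ∀ t k : ℕ, jqp q (β * q ^ t) k ≠ 0 := fun t k =>
    Finset.prod_ne_zero_iff.mpr fun i _ => hβx t i
  have hP_ne : ∀ t : ℕ, (∏' m : ℕ, (1 - β * q ^ t * q ^ m)) ≠ 0 := fun t =>
    jk_tprod_ne_zero hq (hβx t)
  have hshift : ∀ f : ℕ → ℂ,
      ∑ j ∈ Finset.Icc 1 (n + 1), f j = ∑ k ∈ range (n + 1), f (k + 1) := by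
    intro f
    rw [← Finset.Ico_add_one_right_eq_Icc, Finset.sum_Ico_eq_sum_range]
    exact Finset.sum_congr rfl fun k _ => congrArg f (add_comm 1 k)
  rw [hshift]
  have hterm : ∀ k ∈ range (n + 1),
      (1 / ∏' m : ℕ, (1 - β * q ^ (n + (k + 1) - 1) * q ^ m)) /
          ∏ l ∈ (Finset.Icc 1 (n + 1)).erase (k + 1), (q ^ (k + 1) / a - q ^ l / a)
        = a ^ n / (q ^ n * jqp q q n * ∏' m : ℕ, (1 - β * q ^ n * q ^ m)) *
            (jgb q n k * (-1) ^ k * q ^ (k * (k + 1) / 2) / q ^ (k * n) *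
              jqp q (β * q ^ n) k) := by
    intro k hk
    obtain ⟨d, rfl⟩ : ∃ d, n = k + d := ⟨n - k, by have := mem_range.mp hk; omega⟩
    have he : k + d + (k + 1) - 1 = k + d + k := by omega
    rw [he]
    have ht : (∏' m : ℕ, (1 - β * q ^ (k + d + k) * q ^ m))
        = ∏' m : ℕ, (1 - β * q ^ (k + d) * q ^ k * q ^ m) :=
      tprod_congr fun m => by rw [pow_add]; ring
    have hpeel : (∏' m : ℕ, (1 - β * q ^ (k + d) * q ^ m))
        = jqp q (β * q ^ (k + d)) k * ∏' m : ℕ, (1 - β * q ^ (k + d + k) * q ^ m) := by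
      rw [jqp, ht]
      exact jk_peel hq (hβx (k + d)) k
    rw [jk_prod q a ha k d, hpeel]
    have hgb : jgb q (k + d) k * (jqp q q k * jqp q q d) = jqp q q (k + d) := by
      have h := jgb_mul q (k + d) k (Nat.le_add_right k d)
      rwa [Nat.add_sub_cancel_left] at h
    have hE : q ^ (k * (k + 1) / 2) * q ^ (k * (k + 1) / 2) * q ^ ((k + 1) * d)
        = q ^ (k + d) * q ^ (k * (k + d)) := by
      rw [← pow_add, ← pow_add, ← pow_add]
      congr 1
      obtain ⟨u, hu⟩ := Nat.even_mul_succ_self k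
      have h4 : k * (k + d) = k * k + k * d := by ring
      have h5 : (k + 1) * d = k * d + d := by ring
      have h6 : k * (k + 1) = k * k + k := by ring
      omega
    have hs : (-1 : ℂ) ^ k * (-1) ^ k = 1 := by rw [← mul_pow]; norm_num
    exact jk_alg _ _ _ _ _ _ _ _ _ _ _ _ (hP_ne (k + d + k)) (hJc_ne (k + d) k)
      (hqq_ne k) (hqq_ne d) (hqq_ne (k + d)) (pow_ne_zero _ hq0) (pow_ne_zero _ hq0)
      (pow_ne_zero _ hq0) (pow_ne_zero _ hq0) (pow_ne_zero _ ha)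
      hgb hE hs
  rw [Finset.sum_congr rfl hterm, ← Finset.mul_sum, jgb_sum q hq0 (β * q ^ n) n]
  have hrange : (∏ j ∈ range n, (1 - q * q ^ j)) = jqp q q n := rfl
  rw [hrange]
  have hpow : q ^ (n * n) = q ^ n * q ^ (n * (n - 1)) := by
    rw [← pow_add]
    congr 1
    have h : n * (n - 1) + n = n * n := by
      cases n with
      | zero => simp
      | succ m => simp only [Nat.succ_sub_one]; ring
    omega
  rw [mul_pow β (q ^ n) n, ← pow_mul, hpow, mul_pow a β]
  have d1 : q ^ n * jqp q q n * (∏' m : ℕ, (1 - β * q ^ n * q ^ m)) ≠ 0 :=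
    mul_ne_zero (mul_ne_zero (pow_ne_zero _ hq0) (hqq_ne n)) (hP_ne n)
  have d2 : jqp q q n * (∏' m : ℕ, (1 - β * q ^ n * q ^ m)) ≠ 0 :=
    mul_ne_zero (hqq_ne n) (hP_ne n)
  rw [div_mul_eq_mul_div, div_eq_div_iff d1 d2]
  ring
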